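/- Let G be a XOR game with real coefficients (T_{x,y})_{x∈X,y∈Y} satisfying ∑_{x,y}|T_{x,y}| = 1, and n a positive integer. Then ω*_{o.w.-log n}(G) ≤ √n · ω*(G), where ω*_{o.w.-log n}(G) = sup |∑_{x,y} T_{x,y} tr(R_x B_y)| over self-adjoint n×n matrices with ‖R_x‖_{S_1} ≤ 1, ‖B_y‖_{op} ≤ 1, and ω*(G) = sup |∑_{x,y} T_{x,y} ⟨u_x, v_y⟩| over unit vectors u_x, v_y in a real Hilbert space. -/

import Mathlib

open scoped ComplexOrder
open scoped Matrix

/-- The positive semidefinite square root of a positive semidefinite matrix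
(the definition of `Matrix.PosSemidef.sqrt` in the older Mathlib). -/
noncomputable def Matrix.PosSemidef.sqrt {n : Type*} [Fintype n] [DecidableEq n]
    {A : Matrix n n ℂ} (hA : A.PosSemidef) : Matrix n n ℂ :=
  (hA.1.eigenvectorUnitary : Matrix n n ℂ) *
    Matrix.diagonal (fun i => ((Real.sqrt (hA.1.eigenvalues i) : ℝ) : ℂ)) *
    (star hA.1.eigenvectorUnitary : Matrix n n ℂ)

/-- The trace norm (Schatten 1-norm) of a complex square matrix. -/
noncomputable def traceNorm {n : ℕ} (A : Matrix (Fin n) (Fin n) ℂ) : ℝ :=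
  ((Matrix.posSemidef_conjTranspose_mul_self A).sqrt.trace).re

/-- The operator (spectral) norm of a complex square matrix. -/
noncomputable def opNorm {n : ℕ} (A : Matrix (Fin n) (Fin n) ℂ) : ℝ :=
  ‖(Matrix.toEuclideanLin A).toContinuousLinearMap‖

lemma Matrix.PosSemidef.posSemidef_sqrt {n : Type*} [Fintype n] [DecidableEq n]
    {A : Matrix n n ℂ} (hA : A.PosSemidef) : hA.sqrt.PosSemidef := by
  show ((hA.1.eigenvectorUnitary : Matrix n n ℂ) *
    Matrix.diagonal (fun i => ((Real.sqrt (hA.1.eigenvalues i) : ℝ) : ℂ)) *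
    (hA.1.eigenvectorUnitary : Matrix n n ℂ)ᴴ).PosSemidef
  exact (Matrix.PosSemidef.diagonal (fun i => by simp [Real.sqrt_nonneg])).mul_mul_conjTranspose_same _

lemma Matrix.PosSemidef.sqrt_mul_self {n : Type*} [Fintype n] [DecidableEq n]
    {A : Matrix n n ℂ} (hA : A.PosSemidef) : hA.sqrt * hA.sqrt = A := by
  set U : Matrix n n ℂ := (hA.1.eigenvectorUnitary : Matrix n n ℂ) with hU
  set E := Matrix.diagonal (fun i => ((Real.sqrt (hA.1.eigenvalues i) : ℝ) : ℂ)) with hE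
  have hUU : star U * U = 1 := Matrix.mem_unitaryGroup_iff'.mp (hA.1.eigenvectorUnitary).2
  have hspec : A = U * Matrix.diagonal (RCLike.ofReal ∘ hA.1.eigenvalues) * star U :=
    hA.1.spectral_theorem
  have hD : E * E = Matrix.diagonal (RCLike.ofReal ∘ hA.1.eigenvalues) := by
    rw [hE, Matrix.diagonal_mul_diagonal]
    congr 1
    funext i
    rw [← Complex.ofReal_mul, Real.mul_self_sqrt (hA.eigenvalues_nonneg i)]
    rfl
  show U * E * star U * (U * E * star U) = A
  have h : star U * (U * (E * star U)) = E * star U := by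
    rw [← Matrix.mul_assoc, hUU, Matrix.one_mul]
  have hmul : U * E * star U * (U * E * star U) = U * (E * E) * star U := by
    simp only [Matrix.mul_assoc, h]
  rw [hmul, hD]
  exact hspec.symm

open Matrix in
lemma psd_trace_aux {n : ℕ} {P : Matrix (Fin n) (Fin n) ℂ} (hP : P.PosSemidef) :
    0 ≤ (P.trace).re ∧ ((P * P).trace).re ≤ ((P.trace).re)^2 := by
  classical
  have hH := hP.1
  set U : Matrix (Fin n) (Fin n) ℂ := (hH.eigenvectorUnitary : Matrix (Fin n) (Fin n) ℂ) with hU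
  have hUU : star U * U = 1 := mem_unitaryGroup_iff'.mp (hH.eigenvectorUnitary).2
  have hkey : ∀ M : Matrix (Fin n) (Fin n) ℂ, (U * M * star U).trace = M.trace := by
    intro M
    rw [Matrix.trace_mul_comm (U * M) (star U)]
    rw [← Matrix.mul_assoc (star U) U M]
    rw [hUU, Matrix.one_mul]
  set D := Matrix.diagonal ((RCLike.ofReal ∘ hH.eigenvalues : Fin n → ℂ)) with hD
  have hspec : P = U * D * star U := hH.spectral_theorem
  have h1 : P.trace.re = ∑ i, hH.eigenvalues i := by
    have : P.trace = D.trace := (congrArg Matrix.trace hspec).trans (hkey D)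
    rw [this, hD, Matrix.trace_diagonal, Complex.re_sum]
    simp
  have hmul : U * D * star U * (U * D * star U) = U * (D * D) * star U := by
    have h : star U * (U * (D * star U)) = D * star U := by
      rw [← Matrix.mul_assoc, hUU, Matrix.one_mul]
    simp only [Matrix.mul_assoc, h]
  have h2 : ((P * P).trace).re = ∑ i, (hH.eigenvalues i)^2 := by
    have : (P * P).trace = (D * D).trace := by
      have hPP : P * P = U * (D * D) * star U := by rw [hspec] at *; exact hmul
      exact (congrArg Matrix.trace hPP).trans (hkey (D * D))
    rw [this, hD, Matrix.diagonal_mul_diagonal, Matrix.trace_diagonal, Complex.re_sum]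
    simp [sq]
  refine ⟨h1 ▸ Finset.sum_nonneg fun i _ => hP.eigenvalues_nonneg i, ?_⟩
  rw [h1, h2]
  exact Finset.sum_sq_le_sq_sum_of_nonneg fun i _ => hP.eigenvalues_nonneg i
lemma frob_eq {n : ℕ} (A B : Matrix (Fin n) (Fin n) ℂ) :
    ∑ a, ∑ b, ((A a b).re * (B a b).re + (A a b).im * (B a b).im)
      = ((Aᴴ * B).trace).re := by
  rw [Matrix.trace, Complex.re_sum, Finset.sum_comm]
  refine Finset.sum_congr rfl fun a _ => ?_
  rw [Matrix.diag_apply, Matrix.mul_apply, Complex.re_sum]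
  refine Finset.sum_congr rfl fun b _ => ?_
  simp [Matrix.conjTranspose_apply, Complex.mul_re]

lemma trace_mul_real {n : ℕ} {R B : Matrix (Fin n) (Fin n) ℂ}
    (hR : R.IsHermitian) (hB : B.IsHermitian) :
    ((R * B).trace : ℂ) = (((R * B).trace).re : ℂ) := by
  refine (Complex.conj_eq_iff_re.mp ?_).symm
  calc (starRingEnd ℂ) ((R * B).trace) = ((R * B)ᴴ).trace := (Matrix.trace_conjTranspose _).symm
    _ = (Bᴴ * Rᴴ).trace := by rw [Matrix.conjTranspose_mul]
    _ = (R * B).trace := by rw [hB.eq, hR.eq, Matrix.trace_mul_comm]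

lemma frob_le_opNorm {n : ℕ} (A : Matrix (Fin n) (Fin n) ℂ) :
    ((Aᴴ * A).trace).re ≤ n * opNorm A ^ 2 := by
  have hcol : ∀ j, ∑ i, ((A i j).re * (A i j).re + (A i j).im * (A i j).im)
      ≤ opNorm A ^ 2 := by
    intro j
    set L := (Matrix.toEuclideanLin A).toContinuousLinearMap with hL
    have hs : ‖(EuclideanSpace.single j (1:ℂ) : EuclideanSpace ℂ (Fin n))‖ = 1 := by
      rw [EuclideanSpace.norm_single]; simp
    have h1 : ‖L (EuclideanSpace.single j 1)‖ ≤ opNorm A := by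
      have h := L.le_opNorm (EuclideanSpace.single j 1)
      rw [hs, mul_one] at h
      exact h
    have h2 : ‖L (EuclideanSpace.single j 1)‖ ^ 2
        = ∑ i, ((A i j).re * (A i j).re + (A i j).im * (A i j).im) := by
      rw [EuclideanSpace.norm_eq, Real.sq_sqrt (by positivity)]
      refine Finset.sum_congr rfl fun i _ => ?_
      have : L (EuclideanSpace.single j 1) i = A i j := by
        simp [hL, Matrix.toEuclideanLin_apply, Matrix.mulVec_single]
      rw [this, Complex.sq_norm, Complex.normSq_apply]
    calc ∑ i, ((A i j).re * (A i j).re + (A i j).im * (A i j).im)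
        = ‖L (EuclideanSpace.single j 1)‖ ^ 2 := h2.symm
      _ ≤ opNorm A ^ 2 := by
          have h0 : (0:ℝ) ≤ ‖L (EuclideanSpace.single j 1)‖ := norm_nonneg _
          nlinarith
  calc ((Aᴴ * A).trace).re
      = ∑ i, ∑ j, ((A i j).re * (A i j).re + (A i j).im * (A i j).im) := (frob_eq A A).symm
    _ = ∑ j, ∑ i, ((A i j).re * (A i j).re + (A i j).im * (A i j).im) := Finset.sum_comm
    _ ≤ ∑ _j : Fin n, opNorm A ^ 2 := Finset.sum_le_sum fun j _ => hcol j
    _ = n * opNorm A ^ 2 := by simp [Finset.sum_const, mul_comm]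


/-- Embedding of complex matrices into a real Euclidean space carrying the
real part of the Frobenius inner product. -/
noncomputable def phi {n : ℕ} (k : ℕ) (e : (Fin n × Fin n × Bool) ≃ Fin k)
    (A : Matrix (Fin n) (Fin n) ℂ) : EuclideanSpace ℝ (Fin k) :=
  WithLp.toLp 2 fun i => if (e.symm i).2.2 then (A (e.symm i).1 (e.symm i).2.1).re
    else (A (e.symm i).1 (e.symm i).2.1).im

lemma phi_inner {n k : ℕ} (e : (Fin n × Fin n × Bool) ≃ Fin k)
    (A B : Matrix (Fin n) (Fin n) ℂ) :
    (inner ℝ (phi k e A) (phi k e B) : ℝ) = ((Aᴴ * B).trace).re := by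
  rw [← frob_eq]
  calc (inner ℝ (phi k e A) (phi k e B) : ℝ)
      = ∑ i : Fin k, (fun p : Fin n × Fin n × Bool =>
          (if p.2.2 then (A p.1 p.2.1).re else (A p.1 p.2.1).im) *
          (if p.2.2 then (B p.1 p.2.1).re else (B p.1 p.2.1).im)) (e.symm i) := by
        rw [PiLp.inner_apply]
        refine Finset.sum_congr rfl fun i _ => ?_
        simp only [RCLike.inner_apply, conj_trivial, phi, PiLp.toLp_apply, mul_comm]
    _ = ∑ p : Fin n × Fin n × Bool,
          (if p.2.2 then (A p.1 p.2.1).re else (A p.1 p.2.1).im) *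
          (if p.2.2 then (B p.1 p.2.1).re else (B p.1 p.2.1).im) := Equiv.sum_comp e.symm (fun p : Fin n × Fin n × Bool =>
          (if p.2.2 then (A p.1 p.2.1).re else (A p.1 p.2.1).im) *
          (if p.2.2 then (B p.1 p.2.1).re else (B p.1 p.2.1).im))
    _ = ∑ a, ∑ b, ((A a b).re * (B a b).re + (A a b).im * (B a b).im) := by
        rw [Fintype.sum_prod_type]
        refine Finset.sum_congr rfl fun a _ => ?_
        rw [Fintype.sum_prod_type]
        refine Finset.sum_congr rfl fun b _ => ?_
        simp [add_comm]

lemma phi_norm_sq {n k : ℕ} (e : (Fin n × Fin n × Bool) ≃ Fin k)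
    (A : Matrix (Fin n) (Fin n) ℂ) :
    ‖phi k e A‖ ^ 2 = ((Aᴴ * A).trace).re := by
  rw [← phi_inner e A A, real_inner_self_eq_norm_sq]

theorem one_way_quantum_value_le_sqrt_mul_quantum_value
    {X Y : Type*} [Fintype X] [Fintype Y] (n : ℕ) (hn : 0 < n)
    (T : X → Y → ℝ) (hT : ∑ x, ∑ y, |T x y| = 1) :
    sSup {r : ℝ | ∃ (R : X → Matrix (Fin n) (Fin n) ℂ)
        (B : Y → Matrix (Fin n) (Fin n) ℂ),
        (∀ x, (R x).IsHermitian) ∧ (∀ y, (B y).IsHermitian) ∧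
        (∀ x, traceNorm (R x) ≤ 1) ∧ (∀ y, opNorm (B y) ≤ 1) ∧
        r = ‖∑ x, ∑ y, (T x y : ℂ) * (R x * B y).trace‖} ≤
    Real.sqrt n *
      sSup {r : ℝ | ∃ (k : ℕ) (u : X → EuclideanSpace ℝ (Fin k))
          (v : Y → EuclideanSpace ℝ (Fin k)),
          (∀ x, ‖u x‖ ≤ 1) ∧ (∀ y, ‖v y‖ ≤ 1) ∧
          r = |∑ x, ∑ y, T x y * (inner ℝ (u x) (v y) : ℝ)|} := by
  classical
  set S : Set ℝ := {r : ℝ | ∃ (k : ℕ) (u : X → EuclideanSpace ℝ (Fin k))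
          (v : Y → EuclideanSpace ℝ (Fin k)),
          (∀ x, ‖u x‖ ≤ 1) ∧ (∀ y, ‖v y‖ ≤ 1) ∧
          r = |∑ x, ∑ y, T x y * (inner ℝ (u x) (v y) : ℝ)|} with hS
  have hsqrt : (0:ℝ) < Real.sqrt n := Real.sqrt_pos.mpr (by exact_mod_cast hn)
  have hbdd : BddAbove S := by
    refine ⟨1, ?_⟩
    rintro r ⟨k, u, v, hu, hv, rfl⟩
    calc |∑ x, ∑ y, T x y * (inner ℝ (u x) (v y) : ℝ)|
        ≤ ∑ x, |∑ y, T x y * (inner ℝ (u x) (v y) : ℝ)| := Finset.abs_sum_le_sum_abs _ _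
      _ ≤ ∑ x, ∑ y, |T x y * (inner ℝ (u x) (v y) : ℝ)| :=
          Finset.sum_le_sum fun x _ => Finset.abs_sum_le_sum_abs _ _
      _ ≤ ∑ x, ∑ y, |T x y| := by
          refine Finset.sum_le_sum fun x _ => Finset.sum_le_sum fun y _ => ?_
          rw [abs_mul]
          have h1 : |(inner ℝ (u x) (v y) : ℝ)| ≤ 1 := by
            refine le_trans (abs_real_inner_le_norm _ _) ?_
            calc ‖u x‖ * ‖v y‖ ≤ 1 * 1 :=
              mul_le_mul (hu x) (hv y) (norm_nonneg _) zero_le_one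
              _ = 1 := one_mul 1
          calc |T x y| * |(inner ℝ (u x) (v y) : ℝ)| ≤ |T x y| * 1 :=
              mul_le_mul_of_nonneg_left h1 (abs_nonneg _)
            _ = |T x y| := mul_one _
      _ = 1 := hT
  have h0mem : (0:ℝ) ∈ S := by
    refine ⟨0, fun _ => 0, fun _ => 0, fun _ => by simp, fun _ => by simp, ?_⟩
    simp
  have hSnonneg : 0 ≤ sSup S := le_csSup hbdd h0mem
  refine Real.sSup_le ?_ (mul_nonneg hsqrt.le hSnonneg)
  rintro r ⟨R, B, hRh, hBh, hRt, hBo, rfl⟩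
  set k := Fintype.card (Fin n × Fin n × Bool) with hk
  set e : (Fin n × Fin n × Bool) ≃ Fin k := Fintype.equivFin _ with he
  set t : X → Y → ℝ := fun x y => ((R x * B y).trace).re with ht
  -- the trace sum is real
  have hC : ‖∑ x, ∑ y, (T x y : ℂ) * (R x * B y).trace‖
      = |∑ x, ∑ y, T x y * t x y| := by
    have : (∑ x, ∑ y, (T x y : ℂ) * (R x * B y).trace)
        = ((∑ x, ∑ y, T x y * t x y : ℝ) : ℂ) := by
      rw [Complex.ofReal_sum]
      refine Finset.sum_congr rfl fun x _ => ?_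
      rw [Complex.ofReal_sum]
      refine Finset.sum_congr rfl fun y _ => ?_
      rw [trace_mul_real (hRh x) (hBh y)]
      push_cast
      rfl
    rw [this, Complex.norm_real, Real.norm_eq_abs]
  -- the vectors
  set u : X → EuclideanSpace ℝ (Fin k) := fun x => phi k e (R x) with hu
  set v : Y → EuclideanSpace ℝ (Fin k) := fun y => (Real.sqrt n)⁻¹ • phi k e (B y) with hv
  have hunorm : ∀ x, ‖u x‖ ≤ 1 := by
    intro x
    have hpsd := Matrix.posSemidef_conjTranspose_mul_self (R x)
    have hP := hpsd.posSemidef_sqrt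
    have haux := psd_trace_aux hP
    have hsq : hpsd.sqrt * hpsd.sqrt = (R x)ᴴ * R x := hpsd.sqrt_mul_self
    have h1 : ‖u x‖ ^ 2 = (((R x)ᴴ * R x).trace).re := phi_norm_sq e (R x)
    have h2 : (((R x)ᴴ * R x).trace).re ≤ traceNorm (R x) ^ 2 := by
      rw [← hsq]
      exact haux.2
    have h3 : traceNorm (R x) ^ 2 ≤ 1 := by
      have h0 : 0 ≤ traceNorm (R x) := haux.1
      nlinarith [hRt x]
    nlinarith [norm_nonneg (u x), h1, h2, h3]
  have hvnorm : ∀ y, ‖v y‖ ≤ 1 := by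
    intro y
    have h1 : ‖phi k e (B y)‖ ^ 2 = (((B y)ᴴ * B y).trace).re := phi_norm_sq e (B y)
    have h2 : (((B y)ᴴ * B y).trace).re ≤ n * opNorm (B y) ^ 2 := frob_le_opNorm (B y)
    have hop : 0 ≤ opNorm (B y) := norm_nonneg _
    have h3 : ‖phi k e (B y)‖ ^ 2 ≤ (n:ℝ) := by
      have : (n:ℝ) * opNorm (B y) ^ 2 ≤ n * 1 := by
        have := hBo y
        have : opNorm (B y) ^ 2 ≤ 1 := by nlinarith
        nlinarith [Nat.cast_nonneg (α := ℝ) n]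
      nlinarith
    have h4 : ‖phi k e (B y)‖ ≤ Real.sqrt n := by
      rw [show (n:ℝ) = Real.sqrt n ^ 2 by rw [Real.sq_sqrt (Nat.cast_nonneg n)]] at h3
      nlinarith [norm_nonneg (phi k e (B y)), hsqrt]
    calc ‖v y‖ = ‖(Real.sqrt n)⁻¹‖ * ‖phi k e (B y)‖ := norm_smul _ _
      _ = (Real.sqrt n)⁻¹ * ‖phi k e (B y)‖ := by
          rw [Real.norm_eq_abs, abs_of_nonneg (by positivity)]
      _ ≤ (Real.sqrt n)⁻¹ * Real.sqrt n := by
          exact mul_le_mul_of_nonneg_left h4 (by positivity)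
      _ = 1 := inv_mul_cancel₀ hsqrt.ne'
  have hiv : ∀ x y, (inner ℝ (u x) (v y) : ℝ) = (Real.sqrt n)⁻¹ * t x y := by
    intro x y
    rw [hu, hv]
    simp only
    rw [real_inner_smul_right, phi_inner e (R x) (B y), (hRh x).eq]
  have hsum : ∑ x, ∑ y, T x y * (inner ℝ (u x) (v y) : ℝ)
      = (Real.sqrt n)⁻¹ * ∑ x, ∑ y, T x y * t x y := by
    rw [Finset.mul_sum]
    refine Finset.sum_congr rfl fun x _ => ?_
    rw [Finset.mul_sum]
    refine Finset.sum_congr rfl fun y _ => ?_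
    rw [hiv]; ring
  have hmem : |∑ x, ∑ y, T x y * (inner ℝ (u x) (v y) : ℝ)| ∈ S :=
    ⟨k, u, v, hunorm, hvnorm, rfl⟩
  have hval : |∑ x, ∑ y, T x y * (inner ℝ (u x) (v y) : ℝ)|
      = (Real.sqrt n)⁻¹ * |∑ x, ∑ y, T x y * t x y| := by
    rw [hsum, abs_mul, abs_of_nonneg (by positivity)]
  calc ‖∑ x, ∑ y, (T x y : ℂ) * (R x * B y).trace‖
      = |∑ x, ∑ y, T x y * t x y| := hC
    _ = Real.sqrt n * ((Real.sqrt n)⁻¹ * |∑ x, ∑ y, T x y * t x y|) := by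
        field_simp
    _ = Real.sqrt n * |∑ x, ∑ y, T x y * (inner ℝ (u x) (v y) : ℝ)| := by rw [hval]
    _ ≤ Real.sqrt n * sSup S := mul_le_mul_of_nonneg_left (le_csSup hbdd hmem) hsqrt.le
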